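/- Let p be a prime and let c ∈ Z(SU(p)) with c ≠ 1. If x, y ∈ SU(p) satisfy [x,y] = c, then the centralizer of the pair, Z_{SU(p)}(x,y) = {g ∈ SU(p) : gx = xg and gy = yg}, equals the center Z(SU(p)). -/

import Mathlib

/-!
Common setup: the special unitary group `SU(p)`, the central product
`G_{m,p} = SU(p)^m / Δ(Z/p)`, the space `Hom(Z^n, G)` of commuting `n`-tuples,
and the moduli space `Rep(Z^n, G) = Hom(Z^n, G)/G`.
-/

/-- The special unitary group `SU(p)`: the subgroup of the unitary group of `p × p`
complex matrices consisting of the matrices of determinant `1`. -/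
def SUgrp (p : ℕ) : Subgroup (Matrix.unitaryGroup (Fin p) ℂ) :=
  MonoidHom.ker (Matrix.detMonoidHom.comp (Matrix.unitaryGroup (Fin p) ℂ).subtype)

/-- `SU p` as a topological group (topologized as a subspace of the matrices). -/
abbrev SU (p : ℕ) : Type := SUgrp p

/-- The underlying `p × p` complex matrix of an element of `SU p`. -/
noncomputable def SU.mat {p : ℕ} (x : SU p) : Matrix (Fin p) (Fin p) ℂ :=
  ((x : Matrix.unitaryGroup (Fin p) ℂ) : Matrix (Fin p) (Fin p) ℂ)

/-- The diagonal embedding of a group into an `m`-fold product. -/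
def diagHom (G : Type*) [Group G] (m : ℕ) : G →* (Fin m → G) where
  toFun g := fun _ => g
  map_one' := rfl
  map_mul' _ _ := rfl

/-- The diagonal central subgroup `Δ(Z/p) ⊆ SU(p)^m`, consisting of the constant tuples
`(z, ..., z)` with `z` in the center of `SU(p)`. -/
def DeltaZp (p m : ℕ) : Subgroup (Fin m → SU p) :=
  (Subgroup.center (SU p)).map (diagHom (SU p) m)

instance DeltaZp.normal (p m : ℕ) : (DeltaZp p m).Normal := by
  constructor
  intro x hx g
  obtain ⟨z, hz, rfl⟩ := hx
  refine ⟨z, hz, ?_⟩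
  funext i
  simp only [diagHom, MonoidHom.coe_mk, OneHom.coe_mk, Pi.mul_apply, Pi.inv_apply]
  rw [SetLike.mem_coe, Subgroup.mem_center_iff] at hz
  rw [hz (g i), mul_assoc, mul_inv_cancel, mul_one]

/-- The central product `G_{m,p} = SU(p)^m / Δ(Z/p)`, a topological group with the
quotient topology. -/
abbrev Gmp (p m : ℕ) : Type := (Fin m → SU p) ⧸ DeltaZp p m

/-- `Hom(Z^n, G)`: the space of commuting `n`-tuples in `G`, topologized as a subspace
of `G^n`. -/
def commTuples (G : Type*) [Group G] (n : ℕ) : Set (Fin n → G) :=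
  {f | ∀ i j, Commute (f i) (f j)}

/-- The trivial commuting tuple `(1, ..., 1)`. -/
def trivTuple (G : Type*) [Group G] (n : ℕ) : commTuples G n :=
  ⟨fun _ => 1, fun _ _ => Commute.one_left 1⟩

/-- The simultaneous-conjugation equivalence relation on the space of commuting
`n`-tuples in `G`. -/
def conjSetoid (G : Type*) [Group G] (n : ℕ) : Setoid (commTuples G n) where
  r x y := ∃ g : G, ∀ i, (y : Fin n → G) i = g * (x : Fin n → G) i * g⁻¹
  iseqv := by
    constructor
    · exact fun x => ⟨1, fun i => by group⟩
    · rintro x y ⟨g, hg⟩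
      exact ⟨g⁻¹, fun i => by rw [hg i]; group⟩
    · rintro x y z ⟨g, hg⟩ ⟨h, hh⟩
      exact ⟨h * g, fun i => by rw [hh i, hg i]; group⟩

/-- `Rep(Z^n, G) = Hom(Z^n, G)/G`: the quotient of the space of commuting `n`-tuples by
simultaneous conjugation, with the quotient topology. -/
abbrev RepSpace (G : Type*) [Group G] [TopologicalSpace G] (n : ℕ) : Type _ :=
  Quotient (conjSetoid G n)

/-- `N(n,m,p) = p^((m-1)(n-2))·(p^n − 1)·(p^(n-1) − 1)/(p² − 1) + 1` (the division is exact). -/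
def Ncomp (n m p : ℕ) : ℕ :=
  p ^ ((m - 1) * (n - 2)) * (p ^ n - 1) * (p ^ (n - 1) - 1) / (p ^ 2 - 1) + 1

open Matrix in
/-- A matrix element commuting (as SU element) with everything is scalar. -/
lemma SU.central_scalar {p : ℕ} (hp2 : 2 ≤ p) {z : SU p}
    (hz : z ∈ Subgroup.center (SU p)) :
    ∃ ζ : ℂ, z.mat = ζ • (1 : Matrix (Fin p) (Fin p) ℂ) := by
  rw [Subgroup.mem_center_iff] at hz
  have hcomm : ∀ (M : Matrix (Fin p) (Fin p) ℂ) (hu : M ∈ Matrix.unitaryGroup (Fin p) ℂ)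
      (hd : M.det = 1), M * z.mat = z.mat * M := by
    intro M hu hd
    have := hz ⟨⟨M, hu⟩, hd⟩
    have := congrArg (fun w : SU p => w.mat) this
    exact this
  -- off-diagonal vanishing
  have hoff : ∀ i j : Fin p, i ≠ j → z.mat i j = 0 := by
    intro i j hij
    set d : Fin p → ℂ := fun k => if k = i then Complex.I else if k = j then -Complex.I else 1 with hd
    have hdu : Matrix.diagonal d ∈ Matrix.unitaryGroup (Fin p) ℂ := by
      rw [Matrix.mem_unitaryGroup_iff]
      have : star (Matrix.diagonal d) = Matrix.diagonal (star d) := by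
        simp [Matrix.star_eq_conjTranspose, Matrix.diagonal_conjTranspose]
      rw [this, Matrix.diagonal_mul_diagonal]
      have : d * star d = fun _ => 1 := by
        funext k
        simp only [Pi.mul_apply, Pi.star_apply, hd]
        split_ifs <;> simp [Complex.ext_iff]
      show Matrix.diagonal (d * star d) = 1
      have key : d * star d = (1 : Fin p → ℂ) := by
        funext k
        simp only [Pi.mul_apply, Pi.star_apply, Pi.one_apply, hd]
        split_ifs <;> simp [Complex.ext_iff]
      rw [key]; exact Matrix.diagonal_one
    have hdd : (Matrix.diagonal d).det = 1 := by
      rw [Matrix.det_diagonal]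
      rw [← Finset.mul_prod_erase Finset.univ d (Finset.mem_univ i)]
      have hji : j ∈ Finset.univ.erase i := Finset.mem_erase.2 ⟨Ne.symm hij, Finset.mem_univ j⟩
      rw [← Finset.mul_prod_erase _ d hji]
      have h1 : ∀ k ∈ (Finset.univ.erase i).erase j, d k = 1 := by
        intro k hk
        obtain ⟨hkj, hki, -⟩ := by
          refine Finset.mem_erase.1 hk |>.imp id (fun h => Finset.mem_erase.1 h)
        simp [hd, hki, hkj]
      rw [Finset.prod_congr rfl h1]
      simp [hd, hij, Ne.symm hij, Complex.I_mul_I]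
    have h := hcomm _ hdu hdd
    have h2 := congrFun (congrFun h i) j
    rw [Matrix.diagonal_mul, Matrix.mul_diagonal] at h2
    have hdi : d i = Complex.I := by simp [hd]
    have hdj : d j = -Complex.I := by simp [hd, hij.symm, hij]
    rw [hdi, hdj] at h2
    -- I * z i j = z i j * (-I)
    have : (2 * Complex.I) * z.mat i j = 0 := by ring_nf; ring_nf at h2; linear_combination h2
    simpa [Complex.I_ne_zero] using mul_eq_zero.1 this
  -- z is diagonal
  have hzdiag : z.mat = Matrix.diagonal (fun k => z.mat k k) := by
    ext a b
    by_cases h : a = b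
    · subst h; simp
    · rw [Matrix.diagonal_apply_ne _ h]; exact hoff a b h
  have hdiageq : ∀ i j : Fin p, z.mat i i = z.mat j j := by
    intro i j
    by_cases hij : i = j
    · subst hij; rfl
    set σ := Equiv.swap i j with hσ
    set P := σ.permMatrix ℂ with hP
    set e : Fin p → ℂ := fun k => if k = j then -1 else 1 with he
    set S := P * Matrix.diagonal e with hS
    have hee : Matrix.diagonal e * star (Matrix.diagonal e) = 1 := by
      rw [Matrix.star_eq_conjTranspose, Matrix.diagonal_conjTranspose,
        Matrix.diagonal_mul_diagonal]
      show Matrix.diagonal (e * star e) = 1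
      have key : e * star e = (1 : Fin p → ℂ) := by
        funext k
        simp only [Pi.mul_apply, Pi.star_apply, Pi.one_apply, he]
        split_ifs <;> simp
      rw [key]; exact Matrix.diagonal_one
    have hPstar : star P = (σ.toPEquiv.symm).toMatrix := by
      rw [Matrix.star_eq_conjTranspose, PEquiv.toMatrix_symm]
      ext a b
      rw [Matrix.conjTranspose_apply, Matrix.transpose_apply]
      rw [show P = σ.toPEquiv.toMatrix from rfl, PEquiv.toMatrix_apply]
      split_ifs <;> simp
    have hPP : P * star P = 1 := by
      rw [hPstar, hP]
      rw [show Equiv.Perm.permMatrix ℂ σ = σ.toPEquiv.toMatrix from rfl]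
      rw [← PEquiv.toMatrix_trans, ← Equiv.toPEquiv_symm, ← Equiv.toPEquiv_trans,
        Equiv.self_trans_symm, Equiv.toPEquiv_refl, PEquiv.toMatrix_refl]
    have hSu : S ∈ Matrix.unitaryGroup (Fin p) ℂ := by
      rw [Matrix.mem_unitaryGroup_iff, hS, StarMul.star_mul, mul_assoc,
        ← mul_assoc (Matrix.diagonal e), hee, one_mul, hPP]
    have hSd : S.det = 1 := by
      rw [hS, Matrix.det_mul, Matrix.det_permutation, Equiv.Perm.sign_swap hij,
        Matrix.det_diagonal]
      rw [Finset.prod_eq_single_of_mem j (Finset.mem_univ j)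
        (fun b _ hb => if_neg hb)]
      simp [he]
    have h := hcomm S hSu hSd
    have h2 := congrFun (congrFun h i) j
    rw [hzdiag] at h2
    rw [Matrix.mul_diagonal, Matrix.diagonal_mul] at h2
    have hSij : S i j = -1 := by
      rw [hS, Matrix.mul_diagonal]
      have : P i j = 1 := by
        rw [hP, show Equiv.Perm.permMatrix ℂ σ = σ.toPEquiv.toMatrix from rfl,
          PEquiv.toMatrix_apply, Equiv.toPEquiv_apply]
        simp [hσ, Equiv.swap_apply_left]
      rw [this, he]
      simp
    rw [hSij] at h2
    -- h2 : -1 * z.mat j j = z.mat i i * -1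
    have := h2
    linear_combination this
  refine ⟨z.mat ⟨0, by omega⟩ ⟨0, by omega⟩, ?_⟩
  ext a b
  by_cases h : a = b
  · subst h
    rw [Matrix.smul_apply, Matrix.one_apply_eq, smul_eq_mul, mul_one]
    exact hdiageq a ⟨0, by omega⟩
  · rw [Matrix.smul_apply, Matrix.one_apply_ne h, smul_eq_mul, mul_zero]
    exact hoff a b h

open Matrix in
lemma scalar_commutant {p : ℕ} (hp : p.Prime) {X Y G X' Y' : Matrix (Fin p) (Fin p) ℂ}
    {ζ : ℂ} (hζp : ζ ^ p = 1) (hζ1 : ζ ≠ 1)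
    (hX' : X' * X = 1) (hXX' : X * X' = 1) (hY' : Y' * Y = 1)
    (hXY : X * Y = ζ • (Y * X))
    (hGX : G * X = X * G) (hGY : G * Y = Y * G) :
    ∃ lam : ℂ, G = lam • (1 : Matrix (Fin p) (Fin p) ℂ) := by
  haveI : Fact p.Prime := ⟨hp⟩
  haveI : NeZero p := ⟨hp.pos.ne'⟩
  have hζ0 : ζ ≠ 0 := by
    intro h
    rw [h, zero_pow hp.pos.ne'] at hζp
    exact zero_ne_one hζp
  have hprim : IsPrimitiveRoot ζ p := by
    have := IsPrimitiveRoot.orderOf ζ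
    rwa [orderOf_eq_prime hζp hζ1] at this
  have hYX : Y * X = ζ⁻¹ • (X * Y) := by
    rw [hXY, smul_smul, inv_mul_cancel₀ hζ0, one_smul]
  set fY : Module.End ℂ (Fin p → ℂ) := Matrix.mulVecLin Y with hfY
  obtain ⟨μ, hμ⟩ := Module.End.exists_eigenvalue fY
  obtain ⟨v, hv⟩ := hμ.exists_hasEigenvector
  have hYv : Y *ᵥ v = μ • v := hv.apply_eq_smul
  have hμ0 : μ ≠ 0 := by
    intro h
    apply hv.right
    have h1 : Y *ᵥ v = 0 := by rw [hYv, h, zero_smul]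
    have h2 : Y' *ᵥ (Y *ᵥ v) = v := by
      rw [Matrix.mulVec_mulVec, hY', Matrix.one_mulVec]
    rw [h1, Matrix.mulVec_zero] at h2
    exact h2.symm
  -- the eigenvector family
  set vk : Fin p → (Fin p → ℂ) := fun k => (X ^ (k : ℕ)) *ᵥ v with hvk
  set μk : Fin p → ℂ := fun k => ζ⁻¹ ^ (k : ℕ) * μ with hμk
  have heigN : ∀ n : ℕ, Y *ᵥ ((X ^ n) *ᵥ v) = (ζ⁻¹ ^ n * μ) • ((X ^ n) *ᵥ v) := by
    intro n
    induction n with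
    | zero => simpa using hYv
    | succ n ih =>
      rw [pow_succ' X n, ← Matrix.mulVec_mulVec]
      calc Y *ᵥ (X *ᵥ (X ^ n *ᵥ v)) = (Y * X) *ᵥ (X ^ n *ᵥ v) := by
              rw [Matrix.mulVec_mulVec]
        _ = ζ⁻¹ • ((X * Y) *ᵥ (X ^ n *ᵥ v)) := by rw [hYX, Matrix.smul_mulVec]
        _ = ζ⁻¹ • (X *ᵥ (Y *ᵥ (X ^ n *ᵥ v))) := by rw [← Matrix.mulVec_mulVec]
        _ = ζ⁻¹ • (X *ᵥ ((ζ⁻¹ ^ n * μ) • (X ^ n *ᵥ v))) := by rw [ih]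
        _ = ζ⁻¹ • ((ζ⁻¹ ^ n * μ) • (X *ᵥ (X ^ n *ᵥ v))) := by rw [Matrix.mulVec_smul]
        _ = (ζ⁻¹ ^ (n + 1) * μ) • (X *ᵥ (X ^ n *ᵥ v)) := by
              rw [smul_smul, pow_succ']; ring_nf
  have hvk_ne : ∀ k : Fin p, vk k ≠ 0 := by
    intro k hk
    apply hv.right
    have hcom : Commute X' X := by unfold Commute SemiconjBy; rw [hX', hXX']
    have h2 : (X' ^ (k : ℕ)) *ᵥ ((X ^ (k : ℕ)) *ᵥ v) = v := by
      rw [Matrix.mulVec_mulVec, ← hcom.mul_pow, hX', one_pow, Matrix.one_mulVec]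
    rw [show (X ^ (k : ℕ)) *ᵥ v = vk k from rfl, hk, Matrix.mulVec_zero] at h2
    exact h2.symm
  have hinj : Function.Injective μk := by
    intro a b hab
    have h1 : ζ⁻¹ ^ (a : ℕ) = ζ⁻¹ ^ (b : ℕ) := mul_right_cancel₀ hμ0 hab
    exact Fin.ext (hprim.inv.pow_inj a.2 b.2 h1)
  have hEig : ∀ k : Fin p, fY.HasEigenvector (μk k) (vk k) := fun k =>
    ⟨Module.End.mem_eigenspace_iff.2 (heigN (k : ℕ)), hvk_ne k⟩
  have hLI : LinearIndependent ℂ vk := fY.eigenvectors_linearIndependent' μk hinj vk hEig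
  have hcard : Fintype.card (Fin p) = Module.finrank ℂ (Fin p → ℂ) := by simp
  let B : Module.Basis (Fin p) ℂ (Fin p → ℂ) := basisOfLinearIndependentOfCardEqFinrank hLI hcard
  have hB : ∀ k, B k = vk k := fun k => by
    rw [show B = basisOfLinearIndependentOfCardEqFinrank hLI hcard from rfl,
      coe_basisOfLinearIndependentOfCardEqFinrank]
  set w : Fin p → ℂ := G *ᵥ v with hw
  set a : Fin p → ℂ := fun k => B.repr w k with ha
  have hsum : ∑ k, a k • B k = w := B.sum_repr w
  have hfYapp : ∀ u : Fin p → ℂ, fY u = Y *ᵥ u := fun u => rfl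
  have hYw : Y *ᵥ w = μ • w := by
    rw [hw, Matrix.mulVec_mulVec, ← hGY, ← Matrix.mulVec_mulVec, hYv, Matrix.mulVec_smul]
  have hYw2 : Y *ᵥ w = ∑ k, (μk k * a k) • B k := by
    conv_lhs => rw [← hsum]
    rw [← hfYapp, map_sum]
    refine Finset.sum_congr rfl fun k _ => ?_
    rw [_root_.map_smul, hfYapp, hB k, heigN (k : ℕ)]
    rw [smul_smul, mul_comm]
  have hYw3 : Y *ᵥ w = ∑ k, (μ * a k) • B k := by
    rw [hYw, ← hsum, Finset.smul_sum]
    refine Finset.sum_congr rfl fun k _ => ?_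
    rw [smul_smul]
  have hsum0 : ∑ k, (μ * a k - μk k * a k) • B k = 0 := by
    simp only [sub_smul]
    rw [Finset.sum_sub_distrib, ← hYw3, ← hYw2, sub_self]
  have hc := Fintype.linearIndependent_iff.1 B.linearIndependent _ hsum0
  have hμ00 : μk 0 = μ := by simp [hμk]
  have hak : ∀ k : Fin p, k ≠ 0 → a k = 0 := by
    intro k hk
    have h1 := hc k
    have h2 : μ ≠ μk k := by
      intro h
      exact hk (hinj (by rw [hμ00, ← h]))
    have h3 : (μ - μk k) * a k = 0 := by linear_combination h1
    rcases mul_eq_zero.1 h3 with h | h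
    · exact absurd (by linear_combination h) h2
    · exact h
  have hwv : w = a 0 • v := by
    rw [← hsum, Finset.sum_eq_single 0 (fun b _ hb => by rw [hak b hb, zero_smul])
      (fun h => absurd (Finset.mem_univ _) h)]
    rw [hB]
    show a 0 • ((X ^ ((0 : Fin p) : ℕ)) *ᵥ v) = a 0 • v
    norm_num
  refine ⟨a 0, ?_⟩
  have hGvk : ∀ k : Fin p, G *ᵥ vk k = a 0 • vk k := by
    intro k
    have hcom : Commute G X := hGX
    show G *ᵥ ((X ^ (k : ℕ)) *ᵥ v) = a 0 • ((X ^ (k : ℕ)) *ᵥ v)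
    calc G *ᵥ ((X ^ (k : ℕ)) *ᵥ v) = (G * X ^ (k : ℕ)) *ᵥ v := by
            rw [Matrix.mulVec_mulVec]
      _ = (X ^ (k : ℕ) * G) *ᵥ v := by rw [(hcom.pow_right _).eq]
      _ = X ^ (k : ℕ) *ᵥ (G *ᵥ v) := by rw [← Matrix.mulVec_mulVec]
      _ = X ^ (k : ℕ) *ᵥ (a 0 • v) := by rw [← hw, hwv]
      _ = a 0 • ((X ^ (k : ℕ)) *ᵥ v) := by rw [Matrix.mulVec_smul]
  have hlin : Matrix.toLin' G = Matrix.toLin' (a 0 • (1 : Matrix (Fin p) (Fin p) ℂ)) := by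
    apply B.ext
    intro k
    rw [Matrix.toLin'_apply, Matrix.toLin'_apply, hB k, hGvk k, Matrix.smul_mulVec,
      Matrix.one_mulVec]
  exact Matrix.toLin'.injective hlin


private lemma SU.mat_mul' {p : ℕ} (a b : SU p) : (a * b).mat = a.mat * b.mat := rfl
private lemma SU.mat_one' {p : ℕ} : (1 : SU p).mat = 1 := rfl

open scoped commutatorElement

/-- For a prime `p`, a nontrivial central element `c` of `SU(p)`, and `x, y ∈ SU(p)` with
`⁅x,y⁆ = c`, the centralizer of the pair `(x, y)` in `SU(p)` equals the center of `SU(p)`. -/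
theorem centralizer_pair_eq_center (p : ℕ) (hp : p.Prime)
    (c : SU p) (hc : c ∈ Subgroup.center (SU p)) (hc1 : c ≠ 1)
    (x y : SU p) (hxy : ⁅x, y⁆ = c) :
    {g : SU p | g * x = x * g ∧ g * y = y * g} = (Subgroup.center (SU p) : Set (SU p)) := by
  have hp2 := hp.two_le
  ext g
  simp only [Set.mem_setOf_eq, SetLike.mem_coe]
  constructor
  · rintro ⟨hgx, hgy⟩
    obtain ⟨ζ, hcζ⟩ := SU.central_scalar hp2 hc
    have hdet : (c.mat).det = 1 := c.2
    have hζp : ζ ^ p = 1 := by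
      rw [hcζ, Matrix.det_smul, Matrix.det_one, mul_one, Fintype.card_fin] at hdet
      exact hdet
    have hζ1 : ζ ≠ 1 := by
      intro h
      apply hc1
      apply Subtype.ext (Subtype.ext ?_)
      show c.mat = (1 : SU p).mat
      rw [hcζ, h, one_smul, SU.mat_one']
    have hrel : x * y = c * (y * x) := by
      rw [← hxy]; group
    have hXY : x.mat * y.mat = ζ • (y.mat * x.mat) := by
      have h := congrArg SU.mat hrel
      rw [SU.mat_mul', SU.mat_mul', SU.mat_mul', hcζ, smul_mul_assoc, one_mul] at h
      exact h
    have hX' : (x⁻¹).mat * x.mat = 1 := by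
      rw [← SU.mat_mul', inv_mul_cancel, SU.mat_one']
    have hXX' : x.mat * (x⁻¹).mat = 1 := by
      rw [← SU.mat_mul', mul_inv_cancel, SU.mat_one']
    have hY' : (y⁻¹).mat * y.mat = 1 := by
      rw [← SU.mat_mul', inv_mul_cancel, SU.mat_one']
    have hGX : g.mat * x.mat = x.mat * g.mat := congrArg SU.mat hgx
    have hGY : g.mat * y.mat = y.mat * g.mat := congrArg SU.mat hgy
    obtain ⟨lam, hG⟩ := scalar_commutant hp hζp hζ1 hX' hXX' hY' hXY hGX hGY
    rw [Subgroup.mem_center_iff]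
    intro u
    apply Subtype.ext (Subtype.ext ?_)
    show (u * g).mat = (g * u).mat
    rw [SU.mat_mul', SU.mat_mul', hG, mul_smul_comm, smul_mul_assoc, mul_one, one_mul]
  · intro hgc
    have h := Subgroup.mem_center_iff.1 hgc
    exact ⟨(h x).symm, (h y).symm⟩
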